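/- Fix a natural number p ≥ 4, real numbers β₁, β₂, β₃ and complex numbers α₁, …, α₆ with |α₄| = |α₅| and |α₂|² − |α₁|² + 4(2p+1)|α₄|² < 0. Then for every α ∈ (0, 2p(|α₁|² − |α₂|² − 4(2p+1)|α₄|²)) there exist β ∈ [0, ∞) and N₀ ∈ ℤ₊ such that for every n ≥ N₀ and every x ∈ h_n: 2 Re⟨N^p x, N^p P_n G x⟩ + Σ_{k=1}^{6} ‖N^p P_n L_k x‖² ≤ −α ‖N^p x‖² + β (1 + ‖x‖²). -/

import Mathlib

noncomputable section

namespace QOsc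

/-- The annihilation operator `a` in coordinates: `a e_j = √j e_{j-1}`. -/
def ann (f : ℕ → ℂ) : ℕ → ℂ := fun j => (Real.sqrt (j + 1) : ℂ) * f (j + 1)

/-- The creation operator `a†` in coordinates: `a† e_j = √(j+1) e_{j+1}`. -/
def cre (f : ℕ → ℂ) : ℕ → ℂ := fun j => if j = 0 then 0 else (Real.sqrt j : ℂ) * f (j - 1)

/-- The number operator `N = a† a`. -/
def num (f : ℕ → ℂ) : ℕ → ℂ := fun j => (j : ℂ) * f j

/-- The power `N^p` of the number operator. -/
def numPow (p : ℕ) (f : ℕ → ℂ) : ℕ → ℂ := fun j => (j : ℂ) ^ p * f j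

/-- The orthogonal projection `P_n` onto the span `h_n` of `e_0, …, e_n`. -/
def proj (n : ℕ) (f : ℕ → ℂ) : ℕ → ℂ := fun j => if j ≤ n then f j else 0

/-- The inner product `⟨f, g⟩ = Σ_j conj (f_j) g_j` (linear in the second variable). -/
def innerSeq (f g : ℕ → ℂ) : ℂ := ∑' j : ℕ, (starRingEnd ℂ) (f j) * g j

/-- The squared norm `‖f‖² = Σ_j |f_j|²`. -/
def normSq (f : ℕ → ℂ) : ℝ := ∑' j : ℕ, ‖f j‖ ^ 2

/-- The Hamiltonian `H = iβ₁(a† − a) + β₂ N + β₃ (a†)² a²`. -/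
def Ham (b1 b2 b3 : ℝ) (f : ℕ → ℂ) : ℕ → ℂ :=
  (Complex.I * (b1 : ℂ)) • (cre f - ann f) + (b2 : ℂ) • num f
    + (b3 : ℂ) • cre (cre (ann (ann f)))

/-- The effective Hamiltonian
`G = −iH − ½(|α₁|² a† a + |α₂|² a a† + |α₃|² N² + |α₄|² (a†)² a² + |α₅|² a² (a†)² + |α₆|² N⁴)`. -/
def Gop (b1 b2 b3 : ℝ) (a1 a2 a3 a4 a5 a6 : ℂ) (f : ℕ → ℂ) : ℕ → ℂ :=
  (-Complex.I) • Ham b1 b2 b3 f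
    - (1 / 2 : ℂ) •
      (((‖a1‖ ^ 2 : ℝ) : ℂ) • cre (ann f) + ((‖a2‖ ^ 2 : ℝ) : ℂ) • ann (cre f)
        + ((‖a3‖ ^ 2 : ℝ) : ℂ) • num (num f)
        + ((‖a4‖ ^ 2 : ℝ) : ℂ) • cre (cre (ann (ann f)))
        + ((‖a5‖ ^ 2 : ℝ) : ℂ) • ann (ann (cre (cre f)))
        + ((‖a6‖ ^ 2 : ℝ) : ℂ) • num (num (num (num f))))

def DrR (A1 A2 A3 A4 A5 A6 : ℝ) : ℕ → ℝ := fun j =>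
  A1*(j:ℝ) + A2*((j:ℝ)+1) + A3*(j:ℝ)^2 + A4*((j:ℝ)*((j:ℝ)-1))
    + A5*(((j:ℝ)+1)*((j:ℝ)+2)) + A6*(j:ℝ)^4

/-- Coefficient from `‖N^p Pₙ a x‖²`, shifted. -/
def e1 (q : ℕ) (A : ℝ) : ℕ → ℝ
  | 0 => 0
  | (m+1) => A * ((m:ℝ))^q * ((m:ℝ)+1)

/-- Coefficient from `‖N^p Pₙ a² x‖²`, shifted. -/
def e4 (q : ℕ) (A : ℝ) : ℕ → ℝ
  | 0 => 0
  | 1 => 0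
  | (m+2) => A * ((m:ℝ))^q * (((m:ℝ)+1)*((m:ℝ)+2))

/-- Off-diagonal (cross) coefficient. -/
def cP (q : ℕ) (B : ℝ) : ℕ → ℝ := fun j =>
  B * Real.sqrt ((j:ℝ)+1) * (((j:ℝ)+1)^q - (j:ℝ)^q)

def cM (q : ℕ) (B : ℝ) : ℕ → ℝ
  | 0 => 0
  | (m+1) => cP q B m

/-- Total diagonal Lyapunov coefficient. -/
def Etot (q : ℕ) (A1 A2 A3 A4 A5 A6 B1 : ℝ) : ℕ → ℝ := fun j =>
  e1 q A1 j + A2*((j:ℝ)+1)^(q+1) + A3*(j:ℝ)^(q+2) + e4 q A4 j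
    + A5*(((j:ℝ)+2)^(q+1)*((j:ℝ)+1)) + A6*(j:ℝ)^(q+4)
    - (j:ℝ)^q * DrR A1 A2 A3 A4 A5 A6 j + cP q B1 j + cM q B1 j

lemma nat_le_pow2 (m : ℕ) : ((m:ℝ)+3) ≤ 4*2^m := by
  induction m with
  | zero => norm_num
  | succ k ih =>
    have h : (1:ℝ) ≤ 2^k := one_le_pow₀ (by norm_num)
    push_cast
    push_cast at ih
    calc (k:ℝ)+1+3 ≤ 4*2^k + 1 := by linarith
      _ ≤ 4*2^(k+1) := by rw [pow_succ]; nlinarith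

/-- Bernoulli-type lower bound: `(x-b)^(n+1) ≥ x^(n+1) - (n+1) b x^n`. -/
lemma bern_low (b : ℝ) (hb : 0 ≤ b) : ∀ (x : ℝ), b ≤ x → ∀ (n : ℕ),
    x^(n+1) - ((n:ℝ)+1)*b*x^n ≤ (x-b)^(n+1) := by
  intro x hbx n
  induction n with
  | zero => norm_num
  | succ n ih =>
    have hx : 0 ≤ x := le_trans hb hbx
    have h1 : (x^(n+1) - ((n:ℝ)+1)*b*x^n) * (x - b) ≤ (x-b)^(n+1) * (x-b) :=
      mul_le_mul_of_nonneg_right ih (by linarith)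
    have h2 : (x-b)^(n+1) * (x-b) = (x-b)^(n+1+1) := by ring
    have h3 : (x^(n+1) - ((n:ℝ)+1)*b*x^n) * (x - b)
        = x^(n+1+1) - ((n:ℝ)+2)*b*x^(n+1) + ((n:ℝ)+1)*b^2*x^n := by ring
    have h4 : 0 ≤ ((n:ℝ)+1)*b^2*x^n := by positivity
    push_cast
    rw [h2, h3] at h1
    linarith

/-- `(x+b)^(n+1) - x^(n+1) ≥ (n+1) b x^n`. -/
lemma diff_low (b : ℝ) (hb : 0 ≤ b) : ∀ (x : ℝ), 0 ≤ x → ∀ (n : ℕ),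
    ((n:ℝ)+1)*b*x^n ≤ (x+b)^(n+1) - x^(n+1) := by
  intro x hx n
  induction n with
  | zero => norm_num
  | succ n ih =>
    have h1 : ((n:ℝ)+1)*b*x^n * (x+b) ≤ ((x+b)^(n+1) - x^(n+1)) * (x+b) :=
      mul_le_mul_of_nonneg_right ih (by linarith)
    have h2 : ((x+b)^(n+1) - x^(n+1)) * (x+b) = (x+b)^(n+1+1) - x^(n+1+1) - b*x^(n+1) := by ring
    have h3 : ((n:ℝ)+1)*b*x^n * (x+b) = ((n:ℝ)+1)*b*x^(n+1) + ((n:ℝ)+1)*b^2*x^n := by ring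
    have h4 : 0 ≤ ((n:ℝ)+1)*b^2*x^n := by positivity
    rw [h2, h3] at h1
    push_cast
    linarith

/-- `(x+b)^(n+1) - x^(n+1) ≤ (n+1) b (x+b)^n`. -/
lemma diff_up (b : ℝ) (hb : 0 ≤ b) : ∀ (x : ℝ), 0 ≤ x → ∀ (n : ℕ),
    (x+b)^(n+1) - x^(n+1) ≤ ((n:ℝ)+1)*b*(x+b)^n := by
  intro x hx n
  induction n with
  | zero => norm_num
  | succ n ih =>
    have hxb : 0 ≤ x + b := by linarith
    have h1 : ((x+b)^(n+1) - x^(n+1)) * (x+b) ≤ ((n:ℝ)+1)*b*(x+b)^n * (x+b) :=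
      mul_le_mul_of_nonneg_right ih hxb
    have h2 : ((x+b)^(n+1) - x^(n+1)) * (x+b) = (x+b)^(n+1+1) - x^(n+1+1) - b*x^(n+1) := by ring
    have h3 : ((n:ℝ)+1)*b*(x+b)^n * (x+b) = ((n:ℝ)+1)*b*(x+b)^(n+1) := by ring
    have h5 : x^(n+1) ≤ (x+b)^(n+1) := pow_le_pow_left₀ hx (by linarith) (n+1)
    have h6 : 0 ≤ b*(x+b)^(n+1) := by positivity
    rw [h2, h3] at h1
    push_cast
    nlinarith [mul_nonneg hb (pow_nonneg hx (n+1))]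

/-- Third-order upper expansion of `(x+b)^(m+3)`. -/
lemma expand_plus (b : ℝ) (hb : 0 ≤ b) : ∀ (x : ℝ), b ≤ x → ∀ (m : ℕ),
    (x+b)^(m+3) ≤ x^(m+3) + ((m:ℝ)+3)*b*x^(m+2)
      + (((m:ℝ)+3)*((m:ℝ)+2)/2)*b^2*x^(m+1) + 4^(m+3)*b^3*x^m := by
  intro x hbx m
  have hx : 0 ≤ x := le_trans hb hbx
  induction m with
  | zero =>
    have h0 : (x+b)^(0+3) = x^3 + 3*b*x^2 + 3*b^2*x + b^3 := by ring
    rw [h0]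
    push_cast
    norm_num
    nlinarith [pow_nonneg hb 3]
  | succ m ih =>
    have hxb : 0 ≤ x + b := by linarith
    have hq : ((m:ℝ)+3)*((m:ℝ)+2)/2 ≤ 64*4^m := by
      have h6 := nat_le_pow2 m
      have h7 : ((m:ℝ)+2) ≤ 4*2^m := by linarith
      have h8 : (2:ℝ)^m * 2^m = 4^m := by
        rw [show (4:ℝ) = 2*2 from by norm_num, mul_pow]
      have h9 : (0:ℝ) ≤ 2^m := by positivity
      nlinarith [pow_nonneg (show (0:ℝ) ≤ 4 from by norm_num) m]
    have h1 : (x+b)^(m+3) * (x+b) ≤ (x^(m+3) + ((m:ℝ)+3)*b*x^(m+2)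
        + (((m:ℝ)+3)*((m:ℝ)+2)/2)*b^2*x^(m+1) + 4^(m+3)*b^3*x^m) * (x+b) :=
      mul_le_mul_of_nonneg_right ih hxb
    have h2 : (x+b)^(m+3) * (x+b) = (x+b)^(m+1+3) := by ring
    rw [h2] at h1
    refine le_trans h1 ?_
    have key : (x^(m+3) + ((m:ℝ)+3)*b*x^(m+2)
        + (((m:ℝ)+3)*((m:ℝ)+2)/2)*b^2*x^(m+1) + 4^(m+3)*b^3*x^m) * (x+b)
      = (x^(m+1+3) + (((m:ℝ)+1)+3)*b*x^(m+1+2)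
          + ((((m:ℝ)+1)+3)*(((m:ℝ)+1)+2)/2)*b^2*x^(m+1+1) + 4^(m+1+3)*b^3*x^(m+1))
        + (64*4^m*(b^4*x^m) - (192*4^m - ((m:ℝ)+3)*((m:ℝ)+2)/2)*(b^3*x^(m+1))) := by
      ring
    rw [key]
    push_cast
    have k1 : b^4*x^m ≤ b^3*x^(m+1) := by
      have : b^3*x^m*b ≤ b^3*x^m*x := mul_le_mul_of_nonneg_left hbx (by positivity)
      calc b^4*x^m = b^3*x^m*b := by ring
        _ ≤ b^3*x^m*x := this
        _ = b^3*x^(m+1) := by ring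
    have k2 : (0:ℝ) ≤ b^3*x^(m+1) := by positivity
    have k3 : (64:ℝ)*4^m*(b^4*x^m) ≤ 64*4^m*(b^3*x^(m+1)) :=
      mul_le_mul_of_nonneg_left k1 (by positivity)
    have k4 : (64:ℝ)*4^m*(b^3*x^(m+1)) ≤ (192*4^m - ((m:ℝ)+3)*((m:ℝ)+2)/2)*(b^3*x^(m+1)) := by
      apply mul_le_mul_of_nonneg_right _ k2
      have : (0:ℝ) ≤ 4^m := by positivity
      linarith
    linarith

/-- Third-order upper expansion of `(x-b)^(m+3)`. -/
lemma expand_minus (b : ℝ) (hb : 0 ≤ b) : ∀ (x : ℝ), b ≤ x → ∀ (m : ℕ),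
    (x-b)^(m+3) ≤ x^(m+3) - ((m:ℝ)+3)*b*x^(m+2)
      + (((m:ℝ)+3)*((m:ℝ)+2)/2)*b^2*x^(m+1) + 4^(m+3)*b^3*x^m := by
  intro x hbx m
  have hx : 0 ≤ x := le_trans hb hbx
  induction m with
  | zero =>
    have h0 : (x-b)^(0+3) = x^3 - 3*b*x^2 + 3*b^2*x - b^3 := by ring
    rw [h0]
    push_cast
    norm_num
    nlinarith [pow_nonneg hb 3]
  | succ m ih =>
    have hxb : 0 ≤ x - b := by linarith
    have h1 : (x-b)^(m+3) * (x-b) ≤ (x^(m+3) - ((m:ℝ)+3)*b*x^(m+2)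
        + (((m:ℝ)+3)*((m:ℝ)+2)/2)*b^2*x^(m+1) + 4^(m+3)*b^3*x^m) * (x-b) :=
      mul_le_mul_of_nonneg_right ih hxb
    have h2 : (x-b)^(m+3) * (x-b) = (x-b)^(m+1+3) := by ring
    rw [h2] at h1
    refine le_trans h1 ?_
    have key : (x^(m+3) - ((m:ℝ)+3)*b*x^(m+2)
        + (((m:ℝ)+3)*((m:ℝ)+2)/2)*b^2*x^(m+1) + 4^(m+3)*b^3*x^m) * (x-b)
      = (x^(m+1+3) - (((m:ℝ)+1)+3)*b*x^(m+1+2)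
          + ((((m:ℝ)+1)+3)*(((m:ℝ)+1)+2)/2)*b^2*x^(m+1+1) + 4^(m+1+3)*b^3*x^(m+1))
        - ((192*4^m + ((m:ℝ)+3)*((m:ℝ)+2)/2)*(b^3*x^(m+1)) + 64*4^m*(b^4*x^m)) := by
      ring
    rw [key]
    push_cast
    have k2 : (0:ℝ) ≤ b^3*x^(m+1) := by positivity
    have k5 : (0:ℝ) ≤ b^4*x^m := by positivity
    have k6 : (0:ℝ) ≤ 4^m := by positivity
    have k7 : (0:ℝ) ≤ ((m:ℝ)+3)*((m:ℝ)+2)/2 := by positivity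
    nlinarith [mul_nonneg k6 k5, mul_nonneg k6 k2, mul_nonneg k7 k2]

lemma sqrt_succ_le (S : ℝ) (hS : 2 ≤ S) : Real.sqrt (S+1) ≤ 2*Real.sqrt S := by
  have h4 : Real.sqrt (S+1) ≤ Real.sqrt (4*S) := Real.sqrt_le_sqrt (by linarith)
  have : Real.sqrt (4*S) = 2*Real.sqrt S := by
    rw [show (4:ℝ)*S = 2^2*S from by ring, Real.sqrt_mul (by positivity),
      Real.sqrt_sq (by norm_num)]
  linarith

set_option maxHeartbeats 2000000 in
/-- The main scalar estimate: the Lyapunov coefficient at level `S = j ≥ 2`. -/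
lemma scalar_total (r : ℕ) (A1 A2 A4 B1 al : ℝ)
    (h1 : 0 ≤ A1) (h2 : 0 ≤ A2) (h4 : 0 ≤ A4) (hB : 0 ≤ B1)
    (S : ℝ) (hS : 2 ≤ S) :
    A1*(S-1)^(r+3)*S + A2*(S+1)^(r+4)
      + A4*((S-2)^(r+3)*((S-1)*S)) + A4*((S+2)^(r+4)*(S+1))
      - S^(r+3)*(A1*S + A2*(S+1) + A4*(S*(S-1)) + A4*((S+1)*(S+2)))
      + B1*Real.sqrt (S+1)*((S+1)^(r+3) - S^(r+3))
      + B1*Real.sqrt S*(S^(r+3) - (S-1)^(r+3))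
      + al*S^(r+3)
    ≤ (al - (((r:ℝ)+3)*A1 - ((r:ℝ)+3)*A2 - 4*(((r:ℝ)+3)*((r:ℝ)+4))*A4))*S^(r+3)
      + (((r:ℝ)+3)*((r:ℝ)+2)*A1 + ((r:ℝ)+3)*((r:ℝ)+3)*2^(r+2)*A2
          + (4*((r:ℝ)+3) + 12*(((r:ℝ)+3)*((r:ℝ)+2)) + 40*4^(r+3))*A4
          + ((r:ℝ)+3)*(2^(r+3)+1)*B1)
        * (1 + Real.sqrt S) * S^(r+2) := by
  have hS0 : (0:ℝ) ≤ S := by linarith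
  have hS1 : (1:ℝ) ≤ S := by linarith
  have hSm1 : (0:ℝ) ≤ S - 1 := by linarith
  have hSm2 : (0:ℝ) ≤ S - 2 := by linarith
  have hsq : (0:ℝ) ≤ Real.sqrt S := Real.sqrt_nonneg S
  have hpw2 : (0:ℝ) ≤ S^(r+2) := by positivity
  have hpw1 : (0:ℝ) ≤ S^(r+1) := by positivity
  have hpw3 : (0:ℝ) ≤ S^(r+3) := by positivity
  -- T1 bound
  have d1 : ((r:ℝ)+3)*(S-1)^(r+2) ≤ S^(r+3) - (S-1)^(r+3) := by
    have := diff_low 1 (by norm_num) (S-1) hSm1 (r+2)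
    have e : S - 1 + 1 = S := by ring
    rw [e] at this
    push_cast at this ⊢
    linarith
  have b1l : S^(r+2) - ((r:ℝ)+2)*S^(r+1) ≤ (S-1)^(r+2) := by
    have := bern_low 1 (by norm_num) S (by linarith) (r+1)
    push_cast at this ⊢
    linarith
  have T1b : A1*(S-1)^(r+3)*S - S^(r+3)*(A1*S)
      ≤ -(((r:ℝ)+3)*A1)*S^(r+3) + ((r:ℝ)+3)*((r:ℝ)+2)*A1*S^(r+2) := by
    have m1 : (S-1)^(r+3) - S^(r+3) ≤ -(((r:ℝ)+3)*(S-1)^(r+2)) := by linarith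
    have m2 : A1*S*((S-1)^(r+3) - S^(r+3)) ≤ A1*S*(-(((r:ℝ)+3)*(S-1)^(r+2))) :=
      mul_le_mul_of_nonneg_left m1 (mul_nonneg h1 hS0)
    have m3 : ((r:ℝ)+3)*(S^(r+2) - ((r:ℝ)+2)*S^(r+1)) ≤ ((r:ℝ)+3)*(S-1)^(r+2) :=
      mul_le_mul_of_nonneg_left b1l (by positivity)
    have m4 : A1*S*(-(((r:ℝ)+3)*(S-1)^(r+2)))
        ≤ A1*S*(-(((r:ℝ)+3)*(S^(r+2) - ((r:ℝ)+2)*S^(r+1)))) := by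
      apply mul_le_mul_of_nonneg_left _ (mul_nonneg h1 hS0)
      linarith
    have m5 : A1*S*((S-1)^(r+3) - S^(r+3)) = A1*(S-1)^(r+3)*S - S^(r+3)*(A1*S) := by ring
    have m6 : A1*S*(-(((r:ℝ)+3)*(S^(r+2) - ((r:ℝ)+2)*S^(r+1))))
        = -(((r:ℝ)+3)*A1)*(S^(r+2)*S) + ((r:ℝ)+3)*((r:ℝ)+2)*A1*(S^(r+1)*S) := by ring
    have m7 : S^(r+2)*S = S^(r+3) := by ring
    have m8 : S^(r+1)*S = S^(r+2) := by ring
    rw [m5] at m2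
    rw [m6, m7, m8] at m4
    linarith
  -- T2 bound
  have d2 : (S+1)^(r+3) - S^(r+3) ≤ ((r:ℝ)+3)*(S+1)^(r+2) := by
    have := diff_up 1 (by norm_num) S hS0 (r+2)
    push_cast at this ⊢
    linarith
  have pw : (S+1)^(r+2) ≤ 2^(r+2)*S^(r+2) := by
    calc (S+1)^(r+2) ≤ (2*S)^(r+2) := pow_le_pow_left₀ (by linarith) (by linarith) _
      _ = 2^(r+2)*S^(r+2) := mul_pow 2 S (r+2)
  have T2b : A2*(S+1)^(r+4) - S^(r+3)*(A2*(S+1))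
      ≤ ((r:ℝ)+3)*A2*S^(r+3) + ((r:ℝ)+3)*((r:ℝ)+3)*2^(r+2)*A2*S^(r+2) := by
    have m1 : A2*(S+1)*((S+1)^(r+3) - S^(r+3)) ≤ A2*(S+1)*(((r:ℝ)+3)*(S+1)^(r+2)) :=
      mul_le_mul_of_nonneg_left d2 (by positivity)
    have m2 : A2*(S+1)*(((r:ℝ)+3)*(S+1)^(r+2)) = ((r:ℝ)+3)*A2*(S+1)^(r+3) := by ring
    have m3 : (S+1)^(r+3) - S^(r+3) ≤ ((r:ℝ)+3)*(2^(r+2)*S^(r+2)) := by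
      have := mul_le_mul_of_nonneg_left pw (show (0:ℝ) ≤ (r:ℝ)+3 by positivity)
      linarith
    have m4 : ((r:ℝ)+3)*A2*(S+1)^(r+3)
        ≤ ((r:ℝ)+3)*A2*(S^(r+3) + ((r:ℝ)+3)*(2^(r+2)*S^(r+2))) := by
      apply mul_le_mul_of_nonneg_left _ (by positivity)
      linarith
    have m5 : A2*(S+1)*((S+1)^(r+3) - S^(r+3)) = A2*(S+1)^(r+4) - S^(r+3)*(A2*(S+1)) := by ring
    have m6 : ((r:ℝ)+3)*A2*(S^(r+3) + ((r:ℝ)+3)*(2^(r+2)*S^(r+2)))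
        = ((r:ℝ)+3)*A2*S^(r+3) + ((r:ℝ)+3)*((r:ℝ)+3)*2^(r+2)*A2*S^(r+2) := by ring
    rw [m5] at m1
    rw [m2] at m1
    rw [m6] at m4
    linarith
  -- T45 bound
  have em := expand_minus 2 (by norm_num) S (by linarith) r
  have ep := expand_plus 2 (by norm_num) S (by linarith) r
  have T45b : A4*((S-2)^(r+3)*((S-1)*S)) + A4*((S+2)^(r+4)*(S+1))
        - S^(r+3)*(A4*(S*(S-1))) - S^(r+3)*(A4*((S+1)*(S+2)))
      ≤ 4*(((r:ℝ)+3)*((r:ℝ)+4))*A4*S^(r+3)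
        + (4*((r:ℝ)+3) + 12*(((r:ℝ)+3)*((r:ℝ)+2)) + 40*4^(r+3))*A4*S^(r+2) := by
    set M : ℝ := ((r:ℝ)+3)*((r:ℝ)+2) with hM
    set F : ℝ := 4^(r+3) with hF
    have hMnn : 0 ≤ M := by rw [hM]; positivity
    have hFnn : 0 ≤ F := by rw [hF]; positivity
    set E : ℝ := 2*M*S^(r+1) + 8*F*S^r with hE
    have hEnn : 0 ≤ E := by rw [hE, hM, hF]; positivity
    have um : (S-2)^(r+3) - S^(r+3) ≤ -(2*((r:ℝ)+3))*S^(r+2) + E := by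
      rw [hE, hM, hF]; push_cast at em ⊢; nlinarith [em]
    have up : (S+2)^(r+3) - S^(r+3) ≤ (2*((r:ℝ)+3))*S^(r+2) + E := by
      rw [hE, hM, hF]; push_cast at ep ⊢; nlinarith [ep]
    have q1 : 0 ≤ S*(S-1) := mul_nonneg hS0 hSm1
    have q2 : 0 ≤ (S+1)*(S+2) := by positivity
    have w1 : S*(S-1)*((S-2)^(r+3) - S^(r+3)) ≤ S*(S-1)*(-(2*((r:ℝ)+3))*S^(r+2) + E) :=
      mul_le_mul_of_nonneg_left um q1
    have w2 : (S+1)*(S+2)*((S+2)^(r+3) - S^(r+3)) ≤ (S+1)*(S+2)*((2*((r:ℝ)+3))*S^(r+2) + E) :=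
      mul_le_mul_of_nonneg_left up q2
    have comb2 : S*(S-1)*(-(2*((r:ℝ)+3))*S^(r+2) + E) + (S+1)*(S+2)*((2*((r:ℝ)+3))*S^(r+2) + E)
        = 8*((r:ℝ)+3)*S^(r+3) + 4*((r:ℝ)+3)*S^(r+2) + E*(2*(S*S)+2*S+2) := by ring
    have hEex : E*(2*(S*S)+2*S+2) ≤ 4*M*S^(r+3) + (12*M - 8*((r:ℝ)+3))*S^(r+2)
        + 40*F*S^(r+2) := by
      have expand : E*(2*(S*S)+2*S+2) = 4*M*S^(r+3) + 4*M*S^(r+2) + 4*M*S^(r+1)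
          + 16*F*S^(r+2) + 16*F*S^(r+1) + 16*F*S^r := by rw [hE]; ring
      have s3' : 2*S^(r+1) ≤ S^(r+2) := by
        have : S^(r+1)*2 ≤ S^(r+1)*S := mul_le_mul_of_nonneg_left hS hpw1
        have e : S^(r+1)*S = S^(r+2) := by ring
        linarith [e ▸ this]
      have s4' : 4*S^r ≤ S^(r+2) := by
        have h0 : (0:ℝ) ≤ S^r := pow_nonneg hS0 r
        have h44 : (4:ℝ) ≤ S*S := by nlinarith [sq_nonneg (S-2)]
        have : S^r*4 ≤ S^r*(S*S) := mul_le_mul_of_nonneg_left h44 h0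
        have e : S^r*(S*S) = S^(r+2) := by ring
        linarith [e ▸ this]
      have k1 : 4*M*(2*S^(r+1)) ≤ 4*M*S^(r+2) :=
        mul_le_mul_of_nonneg_left s3' (by linarith)
      have k2 : 16*F*(2*S^(r+1)) ≤ 16*F*S^(r+2) :=
        mul_le_mul_of_nonneg_left s3' (by linarith)
      have k3 : 16*F*(4*S^r) ≤ 16*F*S^(r+2) :=
        mul_le_mul_of_nonneg_left s4' (by linarith)
      have k4 : 0 ≤ (6*M - 8*((r:ℝ)+3))*S^(r+2) := by
        apply mul_nonneg _ hpw2
        rw [hM]; nlinarith [sq_nonneg ((r:ℝ)+3)]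
      have k5 : 0 ≤ F*S^(r+2) := mul_nonneg hFnn hpw2
      linarith
    have key : A4*((S-2)^(r+3)*((S-1)*S)) + A4*((S+2)^(r+4)*(S+1))
        - S^(r+3)*(A4*(S*(S-1))) - S^(r+3)*(A4*((S+1)*(S+2)))
      = A4*(S*(S-1)*((S-2)^(r+3) - S^(r+3)) + (S+1)*(S+2)*((S+2)^(r+3) - S^(r+3))) := by ring
    rw [key]
    have w4 : A4*(S*(S-1)*((S-2)^(r+3) - S^(r+3)) + (S+1)*(S+2)*((S+2)^(r+3) - S^(r+3)))
        ≤ A4*(8*((r:ℝ)+3)*S^(r+3) + 4*((r:ℝ)+3)*S^(r+2)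
            + (4*M*S^(r+3) + (12*M - 8*((r:ℝ)+3))*S^(r+2) + 40*F*S^(r+2))) := by
      apply mul_le_mul_of_nonneg_left _ h4
      linarith
    refine le_trans w4 ?_
    have fid : A4*(8*((r:ℝ)+3)*S^(r+3) + 4*((r:ℝ)+3)*S^(r+2)
          + (4*M*S^(r+3) + (12*M - 8*((r:ℝ)+3))*S^(r+2) + 40*F*S^(r+2)))
        = (8*((r:ℝ)+3) + 4*M)*A4*S^(r+3) + (12*M + 40*F - 4*((r:ℝ)+3))*A4*S^(r+2) := by ring
    have fid2 : (8*((r:ℝ)+3) + 4*M) = 4*(((r:ℝ)+3)*((r:ℝ)+4)) := by rw [hM]; ring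
    have slack : 0 ≤ (8*((r:ℝ)+3))*A4*S^(r+2) := by positivity
    rw [fid, fid2, hM, hF]
    nlinarith [slack, hM, hF]
  -- cross bound
  have b2l : S^(r+3) - (S-1)^(r+3) ≤ ((r:ℝ)+3)*S^(r+2) := by
    have := bern_low 1 (by norm_num) S (by linarith) (r+2)
    push_cast at this ⊢
    linarith
  have crossb : B1*Real.sqrt (S+1)*((S+1)^(r+3) - S^(r+3))
        + B1*Real.sqrt S*(S^(r+3) - (S-1)^(r+3))
      ≤ ((r:ℝ)+3)*(2^(r+3)+1)*B1*(Real.sqrt S*S^(r+2)) := by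
    have hq1 : 0 ≤ (S+1)^(r+3) - S^(r+3) := by
      have : S^(r+3) ≤ (S+1)^(r+3) := pow_le_pow_left₀ hS0 (by linarith) _
      linarith
    have c1 : B1*Real.sqrt (S+1)*((S+1)^(r+3) - S^(r+3))
        ≤ B1*(2*Real.sqrt S)*((S+1)^(r+3) - S^(r+3)) := by
      apply mul_le_mul_of_nonneg_right _ hq1
      have := sqrt_succ_le S hS
      nlinarith
    have c2 : B1*(2*Real.sqrt S)*((S+1)^(r+3) - S^(r+3))
        ≤ B1*(2*Real.sqrt S)*(((r:ℝ)+3)*(2^(r+2)*S^(r+2))) := by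
      apply mul_le_mul_of_nonneg_left _ (by positivity)
      have m3 := mul_le_mul_of_nonneg_left pw (show (0:ℝ) ≤ (r:ℝ)+3 by positivity)
      linarith
    have c3 : B1*Real.sqrt S*(S^(r+3) - (S-1)^(r+3))
        ≤ B1*Real.sqrt S*(((r:ℝ)+3)*S^(r+2)) := by
      apply mul_le_mul_of_nonneg_left b2l (by positivity)
    have cid : B1*(2*Real.sqrt S)*(((r:ℝ)+3)*(2^(r+2)*S^(r+2))) + B1*Real.sqrt S*(((r:ℝ)+3)*S^(r+2))
        = ((r:ℝ)+3)*(2^(r+2)*2+1)*B1*(Real.sqrt S*S^(r+2)) := by ring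
    have cpow : (2:ℝ)^(r+3) = 2^(r+2)*2 := by ring
    rw [cpow]
    linarith
  -- combine
  have sqnn : 0 ≤ Real.sqrt S * S^(r+2) := mul_nonneg hsq hpw2
  have rhsexp : (((r:ℝ)+3)*((r:ℝ)+2)*A1 + ((r:ℝ)+3)*((r:ℝ)+3)*2^(r+2)*A2
          + (4*((r:ℝ)+3) + 12*(((r:ℝ)+3)*((r:ℝ)+2)) + 40*4^(r+3))*A4
          + ((r:ℝ)+3)*(2^(r+3)+1)*B1) * (1 + Real.sqrt S) * S^(r+2)
      = (((r:ℝ)+3)*((r:ℝ)+2)*A1)*S^(r+2) + (((r:ℝ)+3)*((r:ℝ)+3)*2^(r+2)*A2)*S^(r+2)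
        + ((4*((r:ℝ)+3) + 12*(((r:ℝ)+3)*((r:ℝ)+2)) + 40*4^(r+3))*A4)*S^(r+2)
        + (((r:ℝ)+3)*(2^(r+3)+1)*B1)*S^(r+2)
        + (((r:ℝ)+3)*((r:ℝ)+2)*A1)*(Real.sqrt S*S^(r+2))
        + (((r:ℝ)+3)*((r:ℝ)+3)*2^(r+2)*A2)*(Real.sqrt S*S^(r+2))
        + ((4*((r:ℝ)+3) + 12*(((r:ℝ)+3)*((r:ℝ)+2)) + 40*4^(r+3))*A4)*(Real.sqrt S*S^(r+2))
        + (((r:ℝ)+3)*(2^(r+3)+1)*B1)*(Real.sqrt S*S^(r+2)) := by ring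
  rw [rhsexp]
  linarith [T1b, T2b, T45b, crossb,
    mul_nonneg (mul_nonneg (mul_nonneg (show (0:ℝ) ≤ ((r:ℝ)+3)*((r:ℝ)+2) by positivity) h1) hsq) hpw2,
    mul_nonneg (mul_nonneg (mul_nonneg (show (0:ℝ) ≤ ((r:ℝ)+3)*((r:ℝ)+3)*2^(r+2) by positivity) h2) hsq) hpw2,
    mul_nonneg (mul_nonneg (mul_nonneg (show (0:ℝ) ≤ 4*((r:ℝ)+3) + 12*(((r:ℝ)+3)*((r:ℝ)+2)) + 40*4^(r+3) by positivity) h4) hsq) hpw2,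
    mul_nonneg (mul_nonneg (show (0:ℝ) ≤ ((r:ℝ)+3)*(2^(r+3)+1) by positivity) hB) hpw2]

set_option maxHeartbeats 1000000 in
lemma etot_bound (r : ℕ) (A1 A2 A3 A4 A6 B1 al : ℝ)
    (h1 : 0 ≤ A1) (h2 : 0 ≤ A2) (h4 : 0 ≤ A4) (hB : 0 ≤ B1)
    (hal : al < ((r:ℝ)+3)*A1 - ((r:ℝ)+3)*A2 - 4*(((r:ℝ)+3)*((r:ℝ)+4))*A4) :
    ∃ be : ℝ, 0 ≤ be ∧ ∀ j : ℕ,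
      Etot (r+3) A1 A2 A3 A4 A4 A6 B1 j ≤ -al*(j:ℝ)^(r+3) + be := by
  set c : ℝ := ((r:ℝ)+3)*A1 - ((r:ℝ)+3)*A2 - 4*(((r:ℝ)+3)*((r:ℝ)+4))*A4 with hc
  set KK : ℝ := ((r:ℝ)+3)*((r:ℝ)+2)*A1 + ((r:ℝ)+3)*((r:ℝ)+3)*2^(r+2)*A2
      + (4*((r:ℝ)+3) + 12*(((r:ℝ)+3)*((r:ℝ)+2)) + 40*4^(r+3))*A4
      + ((r:ℝ)+3)*(2^(r+3)+1)*B1 with hKK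
  clear_value c KK
  have hKKnn : 0 ≤ KK := by
    rw [hKK]
    have k1 : (0:ℝ) ≤ ((r:ℝ)+3)*((r:ℝ)+2)*A1 := mul_nonneg (by positivity) h1
    have k2 : (0:ℝ) ≤ ((r:ℝ)+3)*((r:ℝ)+3)*2^(r+2)*A2 := mul_nonneg (by positivity) h2
    have k3 : (0:ℝ) ≤ (4*((r:ℝ)+3) + 12*(((r:ℝ)+3)*((r:ℝ)+2)) + 40*4^(r+3))*A4 :=
      mul_nonneg (by positivity) h4
    have k4 : (0:ℝ) ≤ ((r:ℝ)+3)*(2^(r+3)+1)*B1 := mul_nonneg (by positivity) hB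
    linarith
  set de : ℝ := c - al with hde
  clear_value de
  have hdepos : 0 < de := by rw [hde]; rw [hc] at hal; linarith
  set C : ℝ := 2*(KK+1)/de with hC
  clear_value C
  have hCpos : 0 < C := by rw [hC]; positivity
  set J : ℕ := 2 + ⌈max C (C^2)⌉₊ with hJ
  have tail : ∀ j : ℕ, J ≤ j →
      Etot (r+3) A1 A2 A3 A4 A4 A6 B1 j + al*(j:ℝ)^(r+3) ≤ 0 := by
    intro j hj
    obtain ⟨m, rfl⟩ : ∃ m, j = m + 2 := ⟨j - 2, by omega⟩
    set S : ℝ := (m:ℝ) + 2 with hSdef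
    have hS : 2 ≤ S := by rw [hSdef]; have : (0:ℝ) ≤ (m:ℝ) := Nat.cast_nonneg m; linarith
    have hS0 : 0 ≤ S := by linarith
    have hcast : ((m+2:ℕ):ℝ) = S := by rw [hSdef]; push_cast; ring
    clear_value S
    have hDr : DrR A1 A2 A3 A4 A4 A6 (m+2)
        = A1*S + A2*(S+1) + A3*S^2 + A4*(S*(S-1)) + A4*((S+1)*(S+2)) + A6*S^4 := by
      simp only [DrR]; rw [hcast]
    have he1 : e1 (r+3) A1 (m+2) = A1*(S-1)^(r+3)*S := by
      show A1 * ((m+1:ℕ):ℝ)^(r+3) * (((m+1:ℕ):ℝ)+1) = _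
      rw [hSdef]; push_cast; ring_nf
    have he4 : e4 (r+3) A4 (m+2) = A4*((S-2)^(r+3)*((S-1)*S)) := by
      show A4 * ((m:ℕ):ℝ)^(r+3) * ((((m:ℕ):ℝ)+1)*(((m:ℕ):ℝ)+2)) = _
      rw [hSdef]; push_cast; ring_nf
    have hcM : cM (r+3) B1 (m+2) = B1*Real.sqrt S*(S^(r+3) - (S-1)^(r+3)) := by
      show cP (r+3) B1 (m+1) = _
      show B1 * Real.sqrt (((m+1:ℕ):ℝ)+1) * ((((m+1:ℕ):ℝ)+1)^(r+3) - ((m+1:ℕ):ℝ)^(r+3)) = _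
      rw [hSdef]; push_cast
      rw [show (m:ℝ) + 1 + 1 = (m:ℝ) + 2 from by ring,
        show (m:ℝ) + 2 - 1 = (m:ℝ) + 1 from by ring]
    have hcP : cP (r+3) B1 (m+2) = B1*Real.sqrt (S+1)*((S+1)^(r+3) - S^(r+3)) := by
      show B1 * Real.sqrt (((m+2:ℕ):ℝ)+1) * ((((m+2:ℕ):ℝ)+1)^(r+3) - ((m+2:ℕ):ℝ)^(r+3)) = _
      rw [hcast]
    have hform : Etot (r+3) A1 A2 A3 A4 A4 A6 B1 (m+2) + al*((m+2:ℕ):ℝ)^(r+3)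
        = A1*(S-1)^(r+3)*S + A2*(S+1)^(r+4)
          + A4*((S-2)^(r+3)*((S-1)*S)) + A4*((S+2)^(r+4)*(S+1))
          - S^(r+3)*(A1*S + A2*(S+1) + A4*(S*(S-1)) + A4*((S+1)*(S+2)))
          + B1*Real.sqrt (S+1)*((S+1)^(r+3) - S^(r+3))
          + B1*Real.sqrt S*(S^(r+3) - (S-1)^(r+3))
          + al*S^(r+3) := by
      simp only [Etot]
      rw [he1, he4, hcM, hcP, hDr, hcast]
      ring
    rw [hform]
    have hst := scalar_total r A1 A2 A4 B1 al h1 h2 h4 hB S hS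
    -- now bound the RHS of scalar_total by 0
    have hSC : max C (C^2) ≤ S := by
      have h1' : (⌈max C (C^2)⌉₊ : ℝ) ≤ ((m+2:ℕ):ℝ) := by
        have : ⌈max C (C^2)⌉₊ ≤ m + 2 := by omega
        exact_mod_cast this
      rw [hcast] at h1'
      exact le_trans (Nat.le_ceil _) h1'
    have hSC1 : C ≤ S := le_trans (le_max_left _ _) hSC
    have hSC2 : C^2 ≤ S := le_trans (le_max_right _ _) hSC
    have hsqge : C ≤ Real.sqrt S := by
      have := Real.sqrt_le_sqrt hSC2
      rwa [Real.sqrt_sq (le_of_lt hCpos)] at this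
    have hsq0 : 0 ≤ Real.sqrt S := Real.sqrt_nonneg S
    have hmul : Real.sqrt S * Real.sqrt S = S := Real.mul_self_sqrt hS0
    have hCde : de*C = 2*(KK+1) := by rw [hC]; field_simp
    have hKK1 : KK*1 ≤ de*S/2 := by
      have h' : de*C ≤ de*S := mul_le_mul_of_nonneg_left hSC1 hdepos.le
      linarith only [hCde, h', hKKnn]
    have hKK2 : KK*Real.sqrt S ≤ de*S/2 := by
      have hKC : KK ≤ de*Real.sqrt S/2 := by
        have h'' : de*C ≤ de*Real.sqrt S := mul_le_mul_of_nonneg_left hsqge hdepos.le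
        linarith only [hCde, h'']
      have h3 := mul_le_mul_of_nonneg_right hKC hsq0
      have h5 : de*Real.sqrt S/2*Real.sqrt S = de*(Real.sqrt S*Real.sqrt S)/2 := by ring
      rw [h5, hmul] at h3
      linarith only [h3]
    have hrhs : (al - (((r:ℝ)+3)*A1 - ((r:ℝ)+3)*A2 - 4*(((r:ℝ)+3)*((r:ℝ)+4))*A4))*S^(r+3)
        + KK * (1 + Real.sqrt S) * S^(r+2) ≤ 0 := by
      have e1' : (al - (((r:ℝ)+3)*A1 - ((r:ℝ)+3)*A2 - 4*(((r:ℝ)+3)*((r:ℝ)+4))*A4)) = -de := by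
        rw [hde, hc]; ring
      rw [e1']
      have hpw2 : (0:ℝ) ≤ S^(r+2) := by positivity
      have hb : KK*(1+Real.sqrt S) ≤ de*S := by linarith only [hKK1, hKK2]
      have h7 := mul_le_mul_of_nonneg_right hb hpw2
      have h9 : de*S*S^(r+2) = de*S^(r+3) := by ring
      linarith only [h7, h9]
    rw [hKK] at hrhs
    exact le_trans hst hrhs
  -- assemble be
  refine ⟨∑ i ∈ Finset.range J,
    max (Etot (r+3) A1 A2 A3 A4 A4 A6 B1 i + al*(i:ℝ)^(r+3)) 0, ?_, ?_⟩
  · exact Finset.sum_nonneg (fun i _ => le_max_right _ _)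
  · intro j
    by_cases hj : j < J
    · have hmem : j ∈ Finset.range J := Finset.mem_range.mpr hj
      have := Finset.single_le_sum
        (f := fun i => max (Etot (r+3) A1 A2 A3 A4 A4 A6 B1 i + al*(i:ℝ)^(r+3)) 0)
        (fun i _ => le_max_right _ _) hmem
      have h2' := le_max_left (Etot (r+3) A1 A2 A3 A4 A4 A6 B1 j + al*(j:ℝ)^(r+3)) (0:ℝ)
      linarith
    · have := tail j (by omega)
      have hbe : (0:ℝ) ≤ ∑ i ∈ Finset.range J,
          max (Etot (r+3) A1 A2 A3 A4 A4 A6 B1 i + al*(i:ℝ)^(r+3)) 0 :=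
        Finset.sum_nonneg (fun i _ => le_max_right _ _)
      linarith


lemma sqrtC_mul_self {r : ℝ} (hr : 0 ≤ r) :
    ((Real.sqrt r : ℝ) : ℂ) * ((Real.sqrt r : ℝ) : ℂ) = (r : ℂ) := by
  rw [← Complex.ofReal_mul, Real.mul_self_sqrt hr]

lemma cre_ann_apply (f : ℕ → ℂ) (j : ℕ) : cre (ann f) j = (j : ℂ) * f j := by
  cases j with
  | zero => simp [cre]
  | succ m =>
    simp only [cre, ann, Nat.succ_ne_zero, if_false, Nat.add_sub_cancel]
    push_cast
    rw [← mul_assoc, sqrtC_mul_self (by positivity)]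
    push_cast
    ring

lemma ann_cre_apply (f : ℕ → ℂ) (j : ℕ) : ann (cre f) j = ((j : ℂ) + 1) * f j := by
  simp only [ann, cre, Nat.succ_ne_zero, if_false, Nat.add_sub_cancel]
  push_cast
  rw [← mul_assoc, sqrtC_mul_self (by positivity)]
  push_cast
  ring

lemma ann_ann_apply (f : ℕ → ℂ) (j : ℕ) :
    ann (ann f) j = ((Real.sqrt ((j:ℝ)+1) : ℝ):ℂ) * ((Real.sqrt ((j:ℝ)+2) : ℝ):ℂ) * f (j+2) := by
  simp only [ann]
  push_cast
  ring_nf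

lemma cre2_ann2_apply (f : ℕ → ℂ) (j : ℕ) :
    cre (cre (ann (ann f))) j = (j : ℂ) * ((j : ℂ) - 1) * f j := by
  match j with
  | 0 => simp [cre]
  | 1 => simp [cre]
  | (m+2) =>
    simp only [cre, Nat.succ_ne_zero, if_false, Nat.add_sub_cancel,
      show m + 2 = (m+1)+1 from rfl, Nat.add_sub_cancel]
    rw [ann_ann_apply]
    push_cast
    have h1 := sqrtC_mul_self (r := (m:ℝ)+1) (by positivity)
    have h2 := sqrtC_mul_self (r := (m:ℝ)+2) (by positivity)
    calc ((Real.sqrt ((m:ℝ)+1+1)):ℂ) * (((Real.sqrt ((m:ℝ)+1)):ℂ) * (((Real.sqrt ((m:ℝ)+1)):ℂ) * ((Real.sqrt ((m:ℝ)+2)):ℂ) * f (m+2)))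
        = (((Real.sqrt ((m:ℝ)+1+1)):ℂ) * ((Real.sqrt ((m:ℝ)+2)):ℂ)) * ((((Real.sqrt ((m:ℝ)+1)):ℂ) * ((Real.sqrt ((m:ℝ)+1)):ℂ))) * f (m+2) := by ring
      _ = ((m:ℂ)+1+1) * ((m:ℂ)+1+1-1) * f (m+2) := by
            rw [show ((m:ℝ)+1+1) = (m:ℝ)+2 from by ring] at *
            rw [h1, h2]; push_cast; ring

lemma cre_cre_apply (f : ℕ → ℂ) (j : ℕ) :
    cre (cre f) (j+2) = ((Real.sqrt ((j:ℝ)+2) : ℝ):ℂ) * ((Real.sqrt ((j:ℝ)+1) : ℝ):ℂ) * f j := by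
  simp only [cre, Nat.succ_ne_zero, if_false, Nat.add_sub_cancel,
    show j + 2 = (j+1)+1 from rfl, Nat.add_sub_cancel]
  push_cast
  ring

lemma ann2_cre2_apply (f : ℕ → ℂ) (j : ℕ) :
    ann (ann (cre (cre f))) j = ((j : ℂ) + 1) * ((j : ℂ) + 2) * f j := by
  rw [ann_ann_apply, cre_cre_apply]
  have h1 := sqrtC_mul_self (r := (j:ℝ)+1) (by positivity)
  have h2 := sqrtC_mul_self (r := (j:ℝ)+2) (by positivity)
  calc ((Real.sqrt ((j:ℝ)+1)):ℂ) * ((Real.sqrt ((j:ℝ)+2)):ℂ) * (((Real.sqrt ((j:ℝ)+2)):ℂ) * ((Real.sqrt ((j:ℝ)+1)):ℂ) * f j)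
      = (((Real.sqrt ((j:ℝ)+1)):ℂ) * ((Real.sqrt ((j:ℝ)+1)):ℂ)) * (((Real.sqrt ((j:ℝ)+2)):ℂ) * ((Real.sqrt ((j:ℝ)+2)):ℂ)) * f j := by ring
    _ = ((j:ℂ)+1) * ((j:ℂ)+2) * f j := by rw [h1, h2]; push_cast; ring

set_option maxRecDepth 4000 in
/-- Pointwise form of the effective Hamiltonian. -/
lemma Gop_apply (b1 b2 b3 : ℝ) (a1 a2 a3 a4 a5 a6 : ℂ) (x : ℕ → ℂ) (j : ℕ) :
    Gop b1 b2 b3 a1 a2 a3 a4 a5 a6 x j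
      = (b1:ℂ) * (cre x j - ann x j)
        + (Complex.I * (((-(b2*(j:ℝ) + b3*((j:ℝ)*((j:ℝ)-1)))) : ℝ) : ℂ)
            + (((-(DrR (‖a1‖^2) (‖a2‖^2) (‖a3‖^2) (‖a4‖^2) (‖a5‖^2) (‖a6‖^2) j / 2)) : ℝ) : ℂ))
          * x j := by
  unfold Gop Ham
  simp only [Pi.add_apply, Pi.sub_apply, Pi.smul_apply, smul_eq_mul]
  rw [cre_ann_apply, ann_cre_apply, cre2_ann2_apply, ann2_cre2_apply]
  simp only [num, DrR]
  push_cast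
  linear_combination (-(b1:ℂ) * (cre x j - ann x j)) * Complex.I_mul_I

/-- Real part of a diagonal quadratic form. -/
lemma re_diag (tI tR : ℝ) (z : ℂ) :
    ((starRingEnd ℂ) z * ((Complex.I * (tI:ℂ) + (tR:ℂ)) * z)).re = tR * ‖z‖^2 := by
  have h : (starRingEnd ℂ) z * ((Complex.I * (tI:ℂ) + (tR:ℂ)) * z)
      = (Complex.I * (tI:ℂ) + (tR:ℂ)) * (z * (starRingEnd ℂ) z) := by ring
  rw [h, Complex.mul_conj, Complex.normSq_eq_norm_sq]
  simp only [Complex.add_re, Complex.mul_re, Complex.I_re, Complex.I_im,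
    Complex.ofReal_re, Complex.ofReal_im]
  ring

/-- Re(conj a * b) is symmetric. -/
lemma re_conj_comm (a b : ℂ) :
    ((starRingEnd ℂ) a * b).re = ((starRingEnd ℂ) b * a).re := by
  simp [Complex.mul_re]
  ring

lemma re_conj_abs (a b : ℂ) : |((starRingEnd ℂ) a * b).re| ≤ ‖a‖ * ‖b‖ := by
  calc |((starRingEnd ℂ) a * b).re| ≤ ‖(starRingEnd ℂ) a * b‖ :=
        Complex.abs_re_le_norm _
    _ = ‖(starRingEnd ℂ) a * b‖ := rfl
    _ = ‖a‖ * ‖b‖ := by rw [norm_mul, RCLike.norm_conj]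

lemma re_piece (b1 tR : ℝ) (tI : ℝ) (z w : ℂ) :
    ((starRingEnd ℂ) z * ((b1:ℂ) * w + (Complex.I * (tI:ℝ) + (tR:ℝ)) * z)).re
      = b1 * ((starRingEnd ℂ) z * w).re + tR * ‖z‖^2 := by
  rw [mul_add, Complex.add_re, re_diag]
  congr 1
  rw [show (starRingEnd ℂ) z * ((b1:ℂ)*w) = (b1:ℂ) * ((starRingEnd ℂ) z * w) from by ring,
    Complex.re_ofReal_mul]

/-- `normSq` of a truncated `numPow` as a finite sum. -/
lemma normSq_proj_numPow (p n : ℕ) (w : ℕ → ℂ) :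
    normSq (numPow p (proj n w)) = ∑ j ∈ Finset.range (n+1), ((j:ℝ)^p)^2 * ‖w j‖^2 := by
  rw [normSq, tsum_eq_sum (s := Finset.range (n+1)) ?_]
  · apply Finset.sum_congr rfl
    intro j hj
    simp only [numPow, proj, if_pos (Nat.lt_succ_iff.mp (Finset.mem_range.mp hj)),
      norm_mul, mul_pow, norm_pow, Complex.norm_natCast]
  · intro j hj
    have hj' : ¬ j ≤ n := fun h => hj (Finset.mem_range.mpr (Nat.lt_succ_of_le h))
    simp [numPow, proj, hj']

lemma normSq_eq_sum (n : ℕ) (x : ℕ → ℂ) (hx : ∀ j, n < j → x j = 0) :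
    normSq x = ∑ j ∈ Finset.range (n+1), ‖x j‖^2 := by
  rw [normSq, tsum_eq_sum (s := Finset.range (n+1)) ?_]
  intro j hj
  rw [hx j (by simpa [Finset.mem_range, Nat.lt_succ_iff] using hj)]
  simp

lemma normSq_numPow_eq (p n : ℕ) (x : ℕ → ℂ) (hx : ∀ j, n < j → x j = 0) :
    normSq (numPow p x) = ∑ j ∈ Finset.range (n+1), ((j:ℝ)^p)^2 * ‖x j‖^2 := by
  rw [normSq, tsum_eq_sum (s := Finset.range (n+1)) ?_]
  · apply Finset.sum_congr rfl
    intro j hj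
    simp only [numPow, norm_mul, mul_pow, norm_pow, Complex.norm_natCast]
  · intro j hj
    rw [numPow, hx j (by simpa [Finset.mem_range, Nat.lt_succ_iff] using hj)]
    simp

lemma norm_sqrtC_sq (r : ℝ) (hr : 0 ≤ r) (z : ℂ) :
    ‖((Real.sqrt r : ℝ):ℂ) * z‖^2 = r * ‖z‖^2 := by
  rw [norm_mul, mul_pow, Complex.norm_real, Real.norm_eq_abs,
    abs_of_nonneg (Real.sqrt_nonneg r), Real.sq_sqrt hr]

lemma bound1 (p n : ℕ) (a1 : ℂ) (x : ℕ → ℂ) (hx : ∀ j, n < j → x j = 0) :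
    normSq (numPow p (proj n (a1 • ann x)))
      ≤ ∑ j ∈ Finset.range (n+1), e1 (2*p) (‖a1‖^2) j * ‖x j‖^2 := by
  rw [normSq_proj_numPow]
  refine le_of_eq ?_
  have hterm : ∀ j : ℕ, ((j:ℝ)^p)^2 * ‖(a1 • ann x) j‖^2
      = e1 (2*p) (‖a1‖^2) (j+1) * ‖x (j+1)‖^2 := by
    intro j
    have h1 : (a1 • ann x) j = a1 * (((Real.sqrt ((j:ℝ)+1) : ℝ):ℂ) * x (j+1)) := by
      simp [ann]
    rw [h1, norm_mul, mul_pow, norm_sqrtC_sq _ (by positivity)]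
    show _ = ‖a1‖ ^ 2 * ((j:ℝ))^(2*p) * ((j:ℝ)+1) * ‖x (j+1)‖^2
    ring
  calc ∑ j ∈ Finset.range (n+1), ((j:ℝ)^p)^2 * ‖(a1 • ann x) j‖^2
      = ∑ j ∈ Finset.range (n+1), e1 (2*p) (‖a1‖^2) (j+1) * ‖x (j+1)‖^2 :=
        Finset.sum_congr rfl (fun j _ => hterm j)
    _ = ∑ j ∈ Finset.range (n+2), e1 (2*p) (‖a1‖^2) j * ‖x j‖^2 := by
        rw [Finset.sum_range_succ' (fun j => e1 (2*p) (‖a1‖^2) j * ‖x j‖^2) (n+1)]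
        simp [e1]
    _ = ∑ j ∈ Finset.range (n+1), e1 (2*p) (‖a1‖^2) j * ‖x j‖^2 := by
        rw [Finset.sum_range_succ, hx (n+1) (by omega)]
        simp

lemma bound2 (p n : ℕ) (a2 : ℂ) (x : ℕ → ℂ) (hx : ∀ j, n < j → x j = 0) :
    normSq (numPow p (proj n (a2 • cre x)))
      ≤ ∑ j ∈ Finset.range (n+1), (‖a2‖^2*((j:ℝ)+1)^(2*p+1)) * ‖x j‖^2 := by
  rw [normSq_proj_numPow]
  have key : ∑ j ∈ Finset.range (n+1), ((j:ℝ)^p)^2 * ‖(a2 • cre x) j‖^2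
      = ∑ j ∈ Finset.range n, (‖a2‖^2*((j:ℝ)+1)^(2*p+1)) * ‖x j‖^2 := by
    rw [Finset.sum_range_succ' (fun j => ((j:ℝ)^p)^2 * ‖(a2 • cre x) j‖^2) n]
    have h0 : (a2 • cre x) 0 = 0 := by simp [cre]
    rw [h0]
    simp only [norm_zero, ne_eq, zero_pow, OfNat.ofNat_ne_zero, not_false_iff, mul_zero, add_zero]
    apply Finset.sum_congr rfl
    intro j hj
    have h1 : (a2 • cre x) (j+1) = a2 * (((Real.sqrt ((j:ℝ)+1) : ℝ):ℂ) * x j) := by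
      simp only [Pi.smul_apply, smul_eq_mul, cre, Nat.succ_ne_zero, if_false,
        Nat.add_sub_cancel]
      push_cast
      ring
    rw [h1, norm_mul, mul_pow, norm_sqrtC_sq _ (by positivity)]
    push_cast
    ring
  rw [key]
  apply Finset.sum_le_sum_of_subset_of_nonneg (Finset.range_subset_range.mpr (by omega))
  intro j _ _
  positivity

lemma bound3 (p n : ℕ) (a3 : ℂ) (x : ℕ → ℂ) :
    normSq (numPow p (proj n (a3 • num x)))
      ≤ ∑ j ∈ Finset.range (n+1), (‖a3‖^2*((j:ℝ))^(2*p+2)) * ‖x j‖^2 := by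
  rw [normSq_proj_numPow]
  refine le_of_eq (Finset.sum_congr rfl (fun j _ => ?_))
  have h1 : (a3 • num x) j = a3 * ((j:ℂ) * x j) := by simp [num]
  rw [h1, norm_mul, mul_pow, norm_mul, mul_pow, Complex.norm_natCast]
  ring

lemma bound6 (p n : ℕ) (a6 : ℂ) (x : ℕ → ℂ) :
    normSq (numPow p (proj n (a6 • num (num x))))
      ≤ ∑ j ∈ Finset.range (n+1), (‖a6‖^2*((j:ℝ))^(2*p+4)) * ‖x j‖^2 := by
  rw [normSq_proj_numPow]
  refine le_of_eq (Finset.sum_congr rfl (fun j _ => ?_))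
  have h1 : (a6 • num (num x)) j = a6 * ((j:ℂ) * ((j:ℂ) * x j)) := by simp [num]
  rw [h1, norm_mul, mul_pow, norm_mul, mul_pow, norm_mul, mul_pow, Complex.norm_natCast]
  ring

lemma bound4 (p n : ℕ) (a4 : ℂ) (x : ℕ → ℂ) (hx : ∀ j, n < j → x j = 0) :
    normSq (numPow p (proj n (a4 • ann (ann x))))
      ≤ ∑ j ∈ Finset.range (n+1), e4 (2*p) (‖a4‖^2) j * ‖x j‖^2 := by
  rw [normSq_proj_numPow]
  refine le_of_eq ?_
  have hterm : ∀ j : ℕ, ((j:ℝ)^p)^2 * ‖(a4 • ann (ann x)) j‖^2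
      = e4 (2*p) (‖a4‖^2) (j+2) * ‖x (j+2)‖^2 := by
    intro j
    have h1 : (a4 • ann (ann x)) j
        = a4 * (((Real.sqrt ((j:ℝ)+1) : ℝ):ℂ) * (((Real.sqrt ((j:ℝ)+2) : ℝ):ℂ) * x (j+2))) := by
      simp only [Pi.smul_apply, smul_eq_mul]
      rw [ann_ann_apply]
      ring
    rw [h1, norm_mul, mul_pow, norm_sqrtC_sq _ (by positivity),
      norm_sqrtC_sq _ (by positivity)]
    show _ = ‖a4‖^2 * ((j:ℝ))^(2*p) * (((j:ℝ)+1)*((j:ℝ)+2)) * ‖x (j+2)‖^2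
    ring
  calc ∑ j ∈ Finset.range (n+1), ((j:ℝ)^p)^2 * ‖(a4 • ann (ann x)) j‖^2
      = ∑ j ∈ Finset.range (n+1), e4 (2*p) (‖a4‖^2) (j+2) * ‖x (j+2)‖^2 :=
        Finset.sum_congr rfl (fun j _ => hterm j)
    _ = ∑ j ∈ Finset.range (n+3), e4 (2*p) (‖a4‖^2) j * ‖x j‖^2 := by
        rw [Finset.sum_range_succ' (fun j => e4 (2*p) (‖a4‖^2) j * ‖x j‖^2) (n+2),
          Finset.sum_range_succ' (fun j => e4 (2*p) (‖a4‖^2) (j+1) * ‖x (j+1)‖^2) (n+1)]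
        simp [e4]
    _ = ∑ j ∈ Finset.range (n+1), e4 (2*p) (‖a4‖^2) j * ‖x j‖^2 := by
        rw [Finset.sum_range_succ, Finset.sum_range_succ,
          hx (n+1) (by omega), hx (n+2) (by omega)]
        simp

lemma bound5 (p n : ℕ) (a5 : ℂ) (x : ℕ → ℂ) (hx : ∀ j, n < j → x j = 0) :
    normSq (numPow p (proj n (a5 • cre (cre x))))
      ≤ ∑ j ∈ Finset.range (n+1), (‖a5‖^2*(((j:ℝ)+2)^(2*p+1)*((j:ℝ)+1))) * ‖x j‖^2 := by
  rw [normSq_proj_numPow]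
  have hnn : ∀ j ∈ Finset.range (n+3), 0 ≤ ((j:ℝ)^p)^2 * ‖(a5 • cre (cre x)) j‖^2 := by
    intro j _; positivity
  calc ∑ j ∈ Finset.range (n+1), ((j:ℝ)^p)^2 * ‖(a5 • cre (cre x)) j‖^2
      ≤ ∑ j ∈ Finset.range (n+3), ((j:ℝ)^p)^2 * ‖(a5 • cre (cre x)) j‖^2 :=
        Finset.sum_le_sum_of_subset_of_nonneg (Finset.range_subset_range.mpr (by omega))
          (fun j hj _ => hnn j hj)
    _ = ∑ j ∈ Finset.range (n+1), (((j+2:ℕ):ℝ)^p)^2 * ‖(a5 • cre (cre x)) (j+2)‖^2 := by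
        rw [Finset.sum_range_succ' (fun j => ((j:ℝ)^p)^2 * ‖(a5 • cre (cre x)) j‖^2) (n+2),
          Finset.sum_range_succ'
            (fun j => (((j+1:ℕ):ℝ)^p)^2 * ‖(a5 • cre (cre x)) (j+1)‖^2) (n+1)]
        have hc0 : (a5 • cre (cre x)) 0 = 0 := by simp [cre]
        have hc1 : (a5 • cre (cre x)) 1 = 0 := by simp [cre]
        rw [hc0, hc1]
        simp
        refine Finset.sum_congr rfl (fun j _ => ?_)
        have hidx : j + 1 + 1 = j + 2 := rfl
        rw [hidx, show ((j:ℝ) + 1 + 1) = (j:ℝ) + 2 from by ring]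
    _ ≤ ∑ j ∈ Finset.range (n+1), (‖a5‖^2*(((j:ℝ)+2)^(2*p+1)*((j:ℝ)+1))) * ‖x j‖^2 := by
        refine le_of_eq (Finset.sum_congr rfl (fun j _ => ?_))
        have h1 : (a5 • cre (cre x)) (j+2)
            = a5 * (((Real.sqrt ((j:ℝ)+2) : ℝ):ℂ) * (((Real.sqrt ((j:ℝ)+1) : ℝ):ℂ) * x j)) := by
          simp only [Pi.smul_apply, smul_eq_mul]
          rw [cre_cre_apply]
          ring
        rw [h1, norm_mul, mul_pow, norm_sqrtC_sq _ (by positivity),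
          norm_sqrtC_sq _ (by positivity)]
        push_cast
        ring

lemma inner_formula (p n : ℕ) (b1 b2 b3 : ℝ) (a1 a2 a3 a4 a5 a6 : ℂ) (x : ℕ → ℂ)
    (hx : ∀ j, n < j → x j = 0) :
    2 * (innerSeq (numPow p x) (numPow p (proj n (Gop b1 b2 b3 a1 a2 a3 a4 a5 a6 x)))).re
      = (∑ j ∈ Finset.range (n+1),
          2*b1*(((j:ℝ)^p)^2*((starRingEnd ℂ) (x j) * (cre x j - ann x j)).re))
        - ∑ j ∈ Finset.range (n+1),
            ((j:ℝ)^p)^2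
              * DrR (‖a1‖^2) (‖a2‖^2) (‖a3‖^2) (‖a4‖^2) (‖a5‖^2) (‖a6‖^2) j * ‖x j‖^2 := by
  rw [innerSeq, tsum_eq_sum (s := Finset.range (n+1))
    (fun j hj => by
      have hnj : n < j := by simpa [Finset.mem_range, Nat.lt_succ_iff] using hj
      simp [numPow, hx j hnj])]
  rw [Complex.re_sum, Finset.mul_sum, ← Finset.sum_sub_distrib]
  apply Finset.sum_congr rfl
  intro j hj
  have hjn : j ≤ n := Nat.lt_succ_iff.mp (Finset.mem_range.mp hj)
  have hproj : proj n (Gop b1 b2 b3 a1 a2 a3 a4 a5 a6 x) j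
      = Gop b1 b2 b3 a1 a2 a3 a4 a5 a6 x j := if_pos hjn
  have hcast : ((((j:ℝ)^p)^2 : ℝ) : ℂ) = (j:ℂ)^p * (j:ℂ)^p := by push_cast; ring
  have key : (starRingEnd ℂ) (numPow p x j)
        * numPow p (proj n (Gop b1 b2 b3 a1 a2 a3 a4 a5 a6 x)) j
      = ((((j:ℝ)^p)^2:ℝ):ℂ) * ((starRingEnd ℂ) (x j)
          * ((b1:ℂ)*(cre x j - ann x j)
            + (Complex.I * (((-(b2*(j:ℝ) + b3*((j:ℝ)*((j:ℝ)-1)))) : ℝ) : ℂ)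
              + (((-(DrR (‖a1‖^2) (‖a2‖^2) (‖a3‖^2) (‖a4‖^2) (‖a5‖^2) (‖a6‖^2) j / 2)) : ℝ) : ℂ))
              * x j)) := by
    simp only [numPow]
    rw [hproj, Gop_apply, map_mul, map_pow, Complex.conj_natCast, hcast]
    ring
  rw [key, Complex.re_ofReal_mul, re_piece]
  ring

lemma cre_diff_nonneg (q j : ℕ) : (0:ℝ) ≤ ((j:ℝ)+1)^q - (j:ℝ)^q := by
  have := pow_le_pow_left₀ (Nat.cast_nonneg j : (0:ℝ) ≤ (j:ℝ))
    (by linarith : (j:ℝ) ≤ (j:ℝ)+1) q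
  linarith

lemma cP_nonneg (q : ℕ) (B : ℝ) (hB : 0 ≤ B) (j : ℕ) : 0 ≤ cP q B j := by
  unfold cP
  have h1 := Real.sqrt_nonneg ((j:ℝ)+1)
  have h2 := cre_diff_nonneg q j
  positivity

lemma cM_nonneg (q : ℕ) (B : ℝ) (hB : 0 ≤ B) (j : ℕ) : 0 ≤ cM q B j := by
  cases j with
  | zero => exact le_refl 0
  | succ m => exact cP_nonneg q B hB m

lemma cross_bound (p n : ℕ) (b1 : ℝ) (x : ℕ → ℂ) (hx : ∀ j, n < j → x j = 0) :
    ∑ j ∈ Finset.range (n+1),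
        2*b1*(((j:ℝ)^p)^2*((starRingEnd ℂ) (x j) * (cre x j - ann x j)).re)
      ≤ ∑ j ∈ Finset.range (n+1), (cP (2*p) |b1| j + cM (2*p) |b1| j) * ‖x j‖^2 := by
  have hsplit : ∀ j : ℕ,
      2*b1*(((j:ℝ)^p)^2*((starRingEnd ℂ) (x j) * (cre x j - ann x j)).re)
        = 2*b1*(((j:ℝ)^p)^2*((starRingEnd ℂ) (x j) * cre x j).re)
          - 2*b1*(((j:ℝ)^p)^2*((starRingEnd ℂ) (x j) * ann x j).re) := by
    intro j
    rw [mul_sub, Complex.sub_re]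
    ring
  rw [Finset.sum_congr rfl (fun j _ => hsplit j), Finset.sum_sub_distrib]
  -- the creation part
  have hA : ∑ j ∈ Finset.range (n+1), 2*b1*(((j:ℝ)^p)^2*((starRingEnd ℂ) (x j) * cre x j).re)
      = ∑ j ∈ Finset.range n,
          2*b1*((((j+1:ℕ):ℝ)^p)^2*Real.sqrt ((j:ℝ)+1)
            *((starRingEnd ℂ) (x (j+1)) * x j).re) := by
    rw [Finset.sum_range_succ'
      (fun j => 2*b1*(((j:ℝ)^p)^2*((starRingEnd ℂ) (x j) * cre x j).re)) n]
    have h0 : cre x 0 = 0 := by simp [cre]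
    rw [h0]
    simp only [mul_zero, Complex.zero_re, add_zero]
    apply Finset.sum_congr rfl
    intro j _
    have h1 : cre x (j+1) = ((Real.sqrt ((j:ℝ)+1) : ℝ):ℂ) * x j := by
      simp only [cre, Nat.succ_ne_zero, if_false, Nat.add_sub_cancel]
      push_cast
      ring
    rw [h1, show (starRingEnd ℂ) (x (j+1)) * (((Real.sqrt ((j:ℝ)+1) : ℝ):ℂ) * x j)
        = ((Real.sqrt ((j:ℝ)+1) : ℝ):ℂ) * ((starRingEnd ℂ) (x (j+1)) * x j) from by ring,
      Complex.re_ofReal_mul]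
    ring
  -- the annihilation part
  have hB : ∑ j ∈ Finset.range (n+1), 2*b1*(((j:ℝ)^p)^2*((starRingEnd ℂ) (x j) * ann x j).re)
      = ∑ j ∈ Finset.range n,
          2*b1*(((j:ℝ)^p)^2*Real.sqrt ((j:ℝ)+1)*((starRingEnd ℂ) (x j) * x (j+1)).re) := by
    rw [Finset.sum_range_succ]
    have h2 : ann x n = ((Real.sqrt ((n:ℝ)+1) : ℝ):ℂ) * x (n+1) := by
      simp only [ann]
    rw [h2, hx (n+1) (by omega)]
    simp only [mul_zero, Complex.zero_re, add_zero]
    apply Finset.sum_congr rfl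
    intro j _
    have h1 : ann x j = ((Real.sqrt ((j:ℝ)+1) : ℝ):ℂ) * x (j+1) := by
      simp only [ann]
    rw [h1, show (starRingEnd ℂ) (x j) * (((Real.sqrt ((j:ℝ)+1) : ℝ):ℂ) * x (j+1))
        = ((Real.sqrt ((j:ℝ)+1) : ℝ):ℂ) * ((starRingEnd ℂ) (x j) * x (j+1)) from by ring,
      Complex.re_ofReal_mul]
    ring
  rw [hA, hB, ← Finset.sum_sub_distrib]
  -- per-term bound on range n
  have hper : ∀ j ∈ Finset.range n,
      2*b1*((((j+1:ℕ):ℝ)^p)^2*Real.sqrt ((j:ℝ)+1)*((starRingEnd ℂ) (x (j+1)) * x j).re)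
        - 2*b1*(((j:ℝ)^p)^2*Real.sqrt ((j:ℝ)+1)*((starRingEnd ℂ) (x j) * x (j+1)).re)
      ≤ cP (2*p) |b1| j * (‖x j‖^2 + ‖x (j+1)‖^2) := by
    intro j _
    have hw : ((starRingEnd ℂ) (x (j+1)) * x j).re = ((starRingEnd ℂ) (x j) * x (j+1)).re :=
      re_conj_comm _ _
    rw [hw]
    set w : ℝ := ((starRingEnd ℂ) (x j) * x (j+1)).re with hwdef
    have habs : |w| ≤ ‖x j‖ * ‖x (j+1)‖ := re_conj_abs _ _
    have hD : (0:ℝ) ≤ Real.sqrt ((j:ℝ)+1) * ((((j:ℝ)+1)^(2*p)) - ((j:ℝ))^(2*p)) :=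
      mul_nonneg (Real.sqrt_nonneg _) (cre_diff_nonneg (2*p) j)
    have hcombine : 2*b1*((((j+1:ℕ):ℝ)^p)^2*Real.sqrt ((j:ℝ)+1)*w)
        - 2*b1*(((j:ℝ)^p)^2*Real.sqrt ((j:ℝ)+1)*w)
        = (Real.sqrt ((j:ℝ)+1) * ((((j:ℝ)+1)^(2*p)) - ((j:ℝ))^(2*p))) * (2*b1*w) := by
      push_cast
      ring
    rw [hcombine]
    have h2w : 2*b1*w ≤ |b1| * (‖x j‖^2 + ‖x (j+1)‖^2) := by
      have h1 : 2*b1*w ≤ 2*(|b1| * |w|) := by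
        calc 2*b1*w ≤ |2*b1*w| := le_abs_self _
          _ = 2*(|b1| * |w|) := by rw [abs_mul, abs_mul, abs_two]; ring
      have h2 : 2*(‖x j‖ * ‖x (j+1)‖) ≤ ‖x j‖^2 + ‖x (j+1)‖^2 := by
        nlinarith [sq_nonneg (‖x j‖ - ‖x (j+1)‖)]
      have h6 : |b1| * |w| ≤ |b1| * (‖x j‖*‖x (j+1)‖) :=
        mul_le_mul_of_nonneg_left habs (abs_nonneg b1)
      have h7 : |b1| * (2*(‖x j‖*‖x (j+1)‖)) ≤ |b1| * (‖x j‖^2+‖x (j+1)‖^2) :=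
        mul_le_mul_of_nonneg_left h2 (abs_nonneg b1)
      nlinarith [abs_nonneg b1]
    calc (Real.sqrt ((j:ℝ)+1) * ((((j:ℝ)+1)^(2*p)) - ((j:ℝ))^(2*p))) * (2*b1*w)
        ≤ (Real.sqrt ((j:ℝ)+1) * ((((j:ℝ)+1)^(2*p)) - ((j:ℝ))^(2*p)))
            * (|b1| * (‖x j‖^2 + ‖x (j+1)‖^2)) := mul_le_mul_of_nonneg_left h2w hD
      _ = cP (2*p) |b1| j * (‖x j‖^2 + ‖x (j+1)‖^2) := by unfold cP; ring
  calc ∑ j ∈ Finset.range n,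
        (2*b1*((((j+1:ℕ):ℝ)^p)^2*Real.sqrt ((j:ℝ)+1)*((starRingEnd ℂ) (x (j+1)) * x j).re)
          - 2*b1*(((j:ℝ)^p)^2*Real.sqrt ((j:ℝ)+1)*((starRingEnd ℂ) (x j) * x (j+1)).re))
      ≤ ∑ j ∈ Finset.range n, cP (2*p) |b1| j * (‖x j‖^2 + ‖x (j+1)‖^2) :=
        Finset.sum_le_sum hper
    _ = ∑ j ∈ Finset.range n, cP (2*p) |b1| j * ‖x j‖^2
        + ∑ j ∈ Finset.range n, cP (2*p) |b1| j * ‖x (j+1)‖^2 := by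
        rw [← Finset.sum_add_distrib]
        exact Finset.sum_congr rfl (fun j _ => by ring)
    _ ≤ ∑ j ∈ Finset.range (n+1), cP (2*p) |b1| j * ‖x j‖^2
        + ∑ j ∈ Finset.range (n+1), cM (2*p) |b1| j * ‖x j‖^2 := by
        have hc1 : ∑ j ∈ Finset.range n, cP (2*p) |b1| j * ‖x j‖^2
            ≤ ∑ j ∈ Finset.range (n+1), cP (2*p) |b1| j * ‖x j‖^2 := by
          apply Finset.sum_le_sum_of_subset_of_nonneg (Finset.range_subset_range.mpr (by omega))
          intro j _ _
          exact mul_nonneg (cP_nonneg (2*p) |b1| (abs_nonneg b1) j) (by positivity)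
        have hc2 : ∑ j ∈ Finset.range n, cP (2*p) |b1| j * ‖x (j+1)‖^2
            = ∑ j ∈ Finset.range (n+1), cM (2*p) |b1| j * ‖x j‖^2 := by
          rw [Finset.sum_range_succ' (fun j => cM (2*p) (|b1|) j * ‖x j‖^2) n]
          have : cM (2*p) |b1| 0 = 0 := rfl
          rw [this]
          simp only [zero_mul, add_zero]
          exact Finset.sum_congr rfl (fun j _ => rfl)
        linarith
    _ = ∑ j ∈ Finset.range (n+1), (cP (2*p) |b1| j + cM (2*p) |b1| j) * ‖x j‖^2 := by
        rw [← Finset.sum_add_distrib]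
        exact Finset.sum_congr rfl (fun j _ => by ring)


set_option maxHeartbeats 1000000 in
/-- the Lyapunov condition (H3.3) for `(N^p, √α N^p)` in the proof of
Theorem 8, degenerate case `|α₄| = |α₅|` with `|α₂|² − |α₁|² + 4(2p+1)|α₄|² < 0`. For
`p ≥ 4` and every `α ∈ (0, 2p(|α₁|² − |α₂|² − 4(2p+1)|α₄|²))` there are `β ≥ 0` and `N₀` with
`2 Re⟨N^p x, N^p Pₙ G x⟩ + Σ_{k=1}^{6} ‖N^p Pₙ L_k x‖² ≤ −α ‖N^p x‖² + β(1 + ‖x‖²)`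
for all `n ≥ N₀` and all `x ∈ h_n`. -/
theorem stmt12 (p : ℕ) (hp : 4 ≤ p) (b1 b2 b3 : ℝ) (a1 a2 a3 a4 a5 a6 : ℂ)
    (ha : ‖a4‖ = ‖a5‖)
    (ha' : ‖a2‖ ^ 2 - ‖a1‖ ^ 2 + 4 * (2 * p + 1) * ‖a4‖ ^ 2 < 0) :
    ∀ al : ℝ, 0 < al → al < 2 * p * (‖a1‖ ^ 2 - ‖a2‖ ^ 2 - 4 * (2 * p + 1) * ‖a4‖ ^ 2) →
      ∃ be : ℝ, 0 ≤ be ∧ ∃ N₀ : ℕ,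
        ∀ n : ℕ, N₀ ≤ n → ∀ x : ℕ → ℂ, (∀ j, n < j → x j = 0) →
          2 * (innerSeq (numPow p x)
                (numPow p (proj n (Gop b1 b2 b3 a1 a2 a3 a4 a5 a6 x)))).re
            + (normSq (numPow p (proj n (a1 • ann x)))
              + normSq (numPow p (proj n (a2 • cre x)))
              + normSq (numPow p (proj n (a3 • num x)))
              + normSq (numPow p (proj n (a4 • ann (ann x))))
              + normSq (numPow p (proj n (a5 • cre (cre x))))
              + normSq (numPow p (proj n (a6 • num (num x)))))
            ≤ -al * normSq (numPow p x) + be * (1 + normSq x) := by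
  intro al hal0 halc
  set r : ℕ := 2*p - 3 with hrdef
  have hr3 : r + 3 = 2*p := by omega
  have h45 : ‖a5‖^2 = ‖a4‖^2 := by rw [ha]
  have hc3 : ((r:ℝ)+3) = 2*(p:ℝ) := by
    have h := congrArg (fun k : ℕ => (k:ℝ)) hr3
    push_cast at h
    linarith
  have hc4 : ((r:ℝ)+4) = 2*(p:ℝ)+1 := by linarith
  have hal' : al < ((r:ℝ)+3)*(‖a1‖^2) - ((r:ℝ)+3)*(‖a2‖^2)
      - 4*(((r:ℝ)+3)*((r:ℝ)+4))*(‖a4‖^2) := by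
    have hid : ((r:ℝ)+3)*(‖a1‖^2) - ((r:ℝ)+3)*(‖a2‖^2)
        - 4*(((r:ℝ)+3)*((r:ℝ)+4))*(‖a4‖^2)
        = 2*(p:ℝ)*(‖a1‖^2 - ‖a2‖^2 - 4*(2*(p:ℝ)+1)*‖a4‖^2) := by
      rw [hc3, hc4]; ring
    rw [hid]
    exact halc
  obtain ⟨be, hbe0, hbe⟩ := etot_bound r (‖a1‖^2) (‖a2‖^2) (‖a3‖^2) (‖a4‖^2) (‖a6‖^2)
    (|b1|) al (by positivity) (by positivity) (by positivity) (abs_nonneg b1) hal'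
  have hbe' : ∀ j : ℕ, Etot (2*p) (‖a1‖^2) (‖a2‖^2) (‖a3‖^2) (‖a4‖^2) (‖a4‖^2) (‖a6‖^2)
      (|b1|) j ≤ -al*(j:ℝ)^(2*p) + be := by
    intro j
    have := hbe j
    rwa [hr3] at this
  refine ⟨be, hbe0, 0, ?_⟩
  intro n _ x hx
  have hinner := inner_formula p n b1 b2 b3 a1 a2 a3 a4 a5 a6 x hx
  have hcross := cross_bound p n b1 x hx
  have h1 := bound1 p n a1 x hx
  have h2 := bound2 p n a2 x hx
  have h3 := bound3 p n a3 x
  have h4 := bound4 p n a4 x hx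
  have h5 := bound5 p n a5 x hx
  have h6 := bound6 p n a6 x
  have hpow : ∀ j : ℕ, (((j:ℝ))^p)^2 = ((j:ℝ))^(2*p) := by
    intro j
    rw [← pow_mul, Nat.mul_comm]
  -- rewrite the DrR sum exponent
  have hdr : ∑ j ∈ Finset.range (n+1),
        ((j:ℝ)^p)^2 * DrR (‖a1‖^2) (‖a2‖^2) (‖a3‖^2) (‖a4‖^2) (‖a5‖^2) (‖a6‖^2) j * ‖x j‖^2
      = ∑ j ∈ Finset.range (n+1),
        ((j:ℝ))^(2*p) * DrR (‖a1‖^2) (‖a2‖^2) (‖a3‖^2) (‖a4‖^2) (‖a5‖^2) (‖a6‖^2) j * ‖x j‖^2 :=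
    Finset.sum_congr rfl (fun j _ => by rw [hpow j])
  -- split the Etot sum
  have hsplit : ∑ j ∈ Finset.range (n+1),
        Etot (2*p) (‖a1‖^2) (‖a2‖^2) (‖a3‖^2) (‖a4‖^2) (‖a5‖^2) (‖a6‖^2) (|b1|) j * ‖x j‖^2
      = (∑ j ∈ Finset.range (n+1), e1 (2*p) (‖a1‖^2) j * ‖x j‖^2)
        + (∑ j ∈ Finset.range (n+1), (‖a2‖^2*((j:ℝ)+1)^(2*p+1)) * ‖x j‖^2)
        + (∑ j ∈ Finset.range (n+1), (‖a3‖^2*((j:ℝ))^(2*p+2)) * ‖x j‖^2)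
        + (∑ j ∈ Finset.range (n+1), e4 (2*p) (‖a4‖^2) j * ‖x j‖^2)
        + (∑ j ∈ Finset.range (n+1), (‖a5‖^2*(((j:ℝ)+2)^(2*p+1)*((j:ℝ)+1))) * ‖x j‖^2)
        + (∑ j ∈ Finset.range (n+1), (‖a6‖^2*((j:ℝ))^(2*p+4)) * ‖x j‖^2)
        - (∑ j ∈ Finset.range (n+1), ((j:ℝ))^(2*p)
            * DrR (‖a1‖^2) (‖a2‖^2) (‖a3‖^2) (‖a4‖^2) (‖a5‖^2) (‖a6‖^2) j * ‖x j‖^2)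
        + (∑ j ∈ Finset.range (n+1), (cP (2*p) (|b1|) j + cM (2*p) (|b1|) j) * ‖x j‖^2) := by
    rw [← Finset.sum_add_distrib, ← Finset.sum_add_distrib, ← Finset.sum_add_distrib,
      ← Finset.sum_add_distrib, ← Finset.sum_add_distrib, ← Finset.sum_sub_distrib,
      ← Finset.sum_add_distrib]
    apply Finset.sum_congr rfl
    intro j _
    unfold Etot
    ring
  -- the main bound via Etot
  have hmain : 2 * (innerSeq (numPow p x)
        (numPow p (proj n (Gop b1 b2 b3 a1 a2 a3 a4 a5 a6 x)))).re
      + (normSq (numPow p (proj n (a1 • ann x)))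
        + normSq (numPow p (proj n (a2 • cre x)))
        + normSq (numPow p (proj n (a3 • num x)))
        + normSq (numPow p (proj n (a4 • ann (ann x))))
        + normSq (numPow p (proj n (a5 • cre (cre x))))
        + normSq (numPow p (proj n (a6 • num (num x)))))
      ≤ ∑ j ∈ Finset.range (n+1),
          Etot (2*p) (‖a1‖^2) (‖a2‖^2) (‖a3‖^2) (‖a4‖^2) (‖a5‖^2) (‖a6‖^2) (|b1|) j
            * ‖x j‖^2 := by
    rw [hinner, hsplit, hdr]
    have hcross' : ∑ j ∈ Finset.range (n+1),
        2*b1*(((j:ℝ)^p)^2*((starRingEnd ℂ) (x j) * (cre x j - ann x j)).re)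
        ≤ ∑ j ∈ Finset.range (n+1), (cP (2*p) (|b1|) j + cM (2*p) (|b1|) j) * ‖x j‖^2 :=
      hcross
    linarith [h1, h2, h3, h4, h5, h6, hcross']
  -- conclude
  have hnormx : normSq x = ∑ j ∈ Finset.range (n+1), ‖x j‖^2 := normSq_eq_sum n x hx
  have hnormpx : normSq (numPow p x) = ∑ j ∈ Finset.range (n+1), ((j:ℝ))^(2*p) * ‖x j‖^2 := by
    rw [normSq_numPow_eq p n x hx]
    exact Finset.sum_congr rfl (fun j _ => by rw [hpow j])
  have hstep : ∑ j ∈ Finset.range (n+1),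
        Etot (2*p) (‖a1‖^2) (‖a2‖^2) (‖a3‖^2) (‖a4‖^2) (‖a5‖^2) (‖a6‖^2) (|b1|) j * ‖x j‖^2
      ≤ ∑ j ∈ Finset.range (n+1), (-al*((j:ℝ))^(2*p) + be) * ‖x j‖^2 := by
    apply Finset.sum_le_sum
    intro j _
    apply mul_le_mul_of_nonneg_right _ (by positivity)
    rw [h45]
    exact hbe' j
  have hfinal : ∑ j ∈ Finset.range (n+1), (-al*((j:ℝ))^(2*p) + be) * ‖x j‖^2
      = -al * normSq (numPow p x) + be * normSq x := by
    rw [hnormpx, hnormx, Finset.mul_sum, Finset.mul_sum, ← Finset.sum_add_distrib]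
    apply Finset.sum_congr rfl
    intro j _
    ring
  have hbound : be * normSq x ≤ be * (1 + normSq x) := by
    have h0 : (0:ℝ) ≤ 1 := by norm_num
    nlinarith [hbe0]
  linarith [hmain, hstep, hfinal.le, hfinal.ge]

end QOsc
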